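/- Let d be a positive integer, δ ∈ [0,1), C ∈ ℝ, V > 0, and let (E_n)_{n≥1} be a nondecreasing sequence of real numbers. Suppose that for every t > 0 the sum ∑_{n=1}^∞ exp(−2t·E_n), taken in [0,∞], satisfies ∑_{n=1}^∞ exp(−2t·E_n) ≤ V · e^{2tC} · (8π(1−δ)t)^{−d/2}. Then for every n ≥ 1, E_n ≥ (2π(1−δ)d/e) · (n/V)^{2/d} − C. -/

import Mathlib

open MeasureTheory Real

/-- (Abstract core of the Weyl-type lower bound, Lemma 2.1.)
Let `d` be a positive integer, `δ ∈ [0,1)`, `C ∈ ℝ`, `V > 0` and `(E_n)` a nondecreasing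
sequence of reals (here indexed by `n : ℕ`, corresponding to `E_{n+1}` in 1-based indexing).
If for every `t > 0` one has `∑_n exp(−2t·E_n) ≤ V·e^{2tC}·(8π(1−δ)t)^{−d/2}` (sum in `[0,∞]`),
then `E_n ≥ (2π(1−δ)d/e)·((n+1)/V)^{2/d} − C` for every `n`. -/
theorem weyl_lower_bound_from_heat_trace (d : ℕ) (hd : 0 < d)
    (δ : ℝ) (hδ : δ ∈ Set.Ico (0:ℝ) 1) (C V : ℝ) (hV : 0 < V)
    (E : ℕ → ℝ) (hE : Monotone E)
    (hsum : ∀ t : ℝ, 0 < t →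
      ∑' n : ℕ, ENNReal.ofReal (Real.exp (-2 * t * E n))
        ≤ ENNReal.ofReal
            (V * Real.exp (2 * t * C) * (8 * Real.pi * (1 - δ) * t) ^ (-(d:ℝ) / 2))) :
    ∀ n : ℕ,
      (2 * Real.pi * (1 - δ) * d / Real.exp 1) * (((n : ℝ) + 1) / V) ^ (2 / (d:ℝ)) - C
        ≤ E n := by
  intro n
  obtain ⟨hδ0, hδ1⟩ := hδ
  have hπ : (0:ℝ) < Real.pi := Real.pi_pos
  have hd' : (0:ℝ) < (d:ℝ) := by exact_mod_cast hd
  set a : ℝ := 8 * Real.pi * (1 - δ) with ha_def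
  have h1δ : (0:ℝ) < 1 - δ := by linarith
  have ha : 0 < a := by rw [ha_def]; positivity
  have hN : (0:ℝ) < ((n:ℝ) + 1) / V := div_pos (by positivity) hV
  set N : ℝ := ((n:ℝ) + 1) / V with hN_def
  set M : ℝ := N ^ (2 / (d:ℝ)) with hM_def
  have hM : 0 < M := Real.rpow_pos_of_pos hN _
  have he : (0:ℝ) < Real.exp 1 := Real.exp_pos 1
  set t : ℝ := Real.exp 1 / (a * M) with ht_def
  have ht : 0 < t := by positivity
  -- Step 1: (n+1) * exp(-2t E n) ≤ RHS (real version)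
  have key : ((n:ℝ) + 1) * Real.exp (-2 * t * E n)
      ≤ V * Real.exp (2 * t * C) * (a * t) ^ (-(d:ℝ) / 2) := by
    have hrhs0 : 0 ≤ V * Real.exp (2 * t * C) * (a * t) ^ (-(d:ℝ) / 2) := by positivity
    rw [← ENNReal.ofReal_le_ofReal_iff hrhs0]
    calc ENNReal.ofReal (((n:ℝ) + 1) * Real.exp (-2 * t * E n))
        = ∑ k ∈ Finset.range (n + 1), ENNReal.ofReal (Real.exp (-2 * t * E n)) := by
          rw [Finset.sum_const, Finset.card_range, nsmul_eq_mul,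
            ENNReal.ofReal_mul (by positivity : (0:ℝ) ≤ (n:ℝ) + 1)]
          congr 1
          rw [← ENNReal.ofReal_natCast]
          push_cast
          ring_nf
      _ ≤ ∑ k ∈ Finset.range (n + 1), ENNReal.ofReal (Real.exp (-2 * t * E k)) := by
          refine Finset.sum_le_sum fun k hk => ?_
          refine ENNReal.ofReal_le_ofReal (Real.exp_le_exp.2 ?_)
          have hkn : k ≤ n := Nat.lt_succ_iff.mp (Finset.mem_range.mp hk)
          have := hE hkn
          nlinarith
      _ ≤ ∑' k : ℕ, ENNReal.ofReal (Real.exp (-2 * t * E k)) := ENNReal.sum_le_tsum _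
      _ ≤ ENNReal.ofReal (V * Real.exp (2 * t * C) * (a * t) ^ (-(d:ℝ) / 2)) := hsum t ht
  -- Step 2: simplify (a*t)^(-d/2)
  have hat : a * t = Real.exp 1 / M := by
    rw [ht_def]; field_simp
  have hMpow : M ^ (-(d:ℝ) / 2) = N⁻¹ := by
    rw [hM_def, ← Real.rpow_mul hN.le]
    have hexp : 2 / (d:ℝ) * (-(d:ℝ) / 2) = -1 := by
      field_simp
    rw [hexp, Real.rpow_neg_one]
  have hpow : (a * t) ^ (-(d:ℝ) / 2) = Real.exp (-(d:ℝ) / 2) * N := by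
    rw [hat, Real.div_rpow he.le hM.le, Real.exp_one_rpow, hMpow, division_def, inv_inv]
  have key2 : ((n:ℝ) + 1) * Real.exp (-2 * t * E n)
      ≤ ((n:ℝ) + 1) * Real.exp (2 * t * C + -(d:ℝ) / 2) := by
    have hVN : V * N = (n:ℝ) + 1 := by
      rw [hN_def]; field_simp
    calc ((n:ℝ) + 1) * Real.exp (-2 * t * E n)
        ≤ V * Real.exp (2 * t * C) * (Real.exp (-(d:ℝ) / 2) * N) := by
          rw [← hpow]; exact key
      _ = ((n:ℝ) + 1) * Real.exp (2 * t * C + -(d:ℝ) / 2) := by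
          rw [Real.exp_add, ← hVN]; ring
  have key3 : -2 * t * E n ≤ 2 * t * C + -(d:ℝ) / 2 := by
    have h := (mul_le_mul_iff_right₀ (by positivity : (0:ℝ) < (n:ℝ) + 1)).mp key2
    exact Real.exp_le_exp.mp h
  -- Step 3: conclude
  have htval : t * (a * M) = Real.exp 1 := by
    rw [ht_def]; field_simp
  have : (d:ℝ) / 2 ≤ 2 * t * (E n + C) := by linarith
  have hEC : (d:ℝ) / (4 * t) ≤ E n + C := by
    rw [div_le_iff₀ (by positivity)]
    nlinarith
  have hfinal : (d:ℝ) / (4 * t) = a * (d:ℝ) * M / (4 * Real.exp 1) := by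
    rw [ht_def]
    field_simp
  rw [hfinal] at hEC
  have : 2 * Real.pi * (1 - δ) * (d:ℝ) / Real.exp 1 * M = a * (d:ℝ) * M / (4 * Real.exp 1) := by
    rw [ha_def]; ring
  linarith
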